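/- arXiv:1108.5621 — 2 statements merged into one kernel-verified Lean document; each statement's English description precedes it below -/
import Mathlib

section
/- For every z in the open unit disk of ℂ, the number ρ(z) = (1 − √(1 − z²))/z (extended by ρ(0) = 0) satisfies |ρ(z)| < 1, where √ denotes the principal branch of the square root. -/
open Complex

/-- `ρ(z) = (1 - √(1-z²))/z`, with the principal branch of the square root
(given by the complex power `w ^ (1/2)`).  Note `ρ(0) = 0` since `0/0 = 0` in Lean. -/
noncomputable def rho (z : ℂ) : ℂ := (1 - (1 - z ^ 2) ^ ((1 : ℂ) / 2)) / z

/-- For every `z` in the open unit disk, `|ρ(z)| < 1`. -/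
theorem stmt_1 (z : ℂ) (hz : ‖z‖ < 1) : ‖rho z‖ < 1 := by
  rcases eq_or_ne z 0 with rfl | hz0
  · simp [rho]
  set s : ℂ := (1 - z ^ 2) ^ ((1 : ℂ) / 2) with hs
  have hsq : s ^ 2 = 1 - z ^ 2 := by
    rw [hs, show ((1 : ℂ) / 2) = ((2 : ℕ) : ℂ)⁻¹ by norm_num]
    exact Complex.cpow_nat_inv_pow _ two_ne_zero
  -- real part of 1 - z^2 is positive
  have hnsq : Complex.normSq z < 1 := by
    have := Complex.sq_norm z
    nlinarith [norm_nonneg z]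
  have hwre : 0 < (1 - z ^ 2).re := by
    simp only [Complex.sub_re, Complex.one_re, Complex.sq_norm, pow_two, Complex.mul_re]
    have := Complex.normSq_apply z
    nlinarith [sq_nonneg z.im]
  have hw0 : (1 - z ^ 2) ≠ 0 := by
    intro h; rw [h] at hwre; simp at hwre
  -- Re s > 0
  have hsre : 0 < s.re := by
    rw [hs, Complex.cpow_def_of_ne_zero hw0]
    rw [Complex.exp_re]
    have harg : |Complex.arg (1 - z ^ 2)| < Real.pi / 2 :=
      Complex.abs_arg_lt_pi_div_two_iff.mpr (Or.inl hwre)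
    have him : (Complex.log (1 - z ^ 2) * (1 / 2)).im = Complex.arg (1 - z ^ 2) / 2 := by
      simp [Complex.mul_im, Complex.log_im]
      ring
    rw [him]
    have hcos : 0 < Real.cos (Complex.arg (1 - z ^ 2) / 2) := by
      apply Real.cos_pos_of_mem_Ioo
      constructor <;> [nlinarith [abs_lt.mp harg]; nlinarith [abs_lt.mp harg]]
    positivity
  have hs1 : s ≠ 1 := by
    intro h
    rw [h] at hsq
    have : z ^ 2 = 0 := by linear_combination hsq
    exact hz0 (pow_eq_zero_iff two_ne_zero |>.mp this)
  -- |1-s| < |1+s|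
  have hlt : ‖1 - s‖ < ‖1 + s‖ := by
    have h1 : Complex.normSq (1 - s) < Complex.normSq (1 + s) := by
      simp only [Complex.normSq_apply, Complex.sub_re, Complex.sub_im, Complex.add_re,
        Complex.add_im, Complex.one_re, Complex.one_im]
      nlinarith
    have := Complex.sq_norm (1 - s)
    have := Complex.sq_norm (1 + s)
    nlinarith [norm_nonneg (1 - s), norm_nonneg (1 + s)]
  have hfac : ‖z‖ ^ 2 = ‖1 - s‖ * ‖1 + s‖ := by
    have : z ^ 2 = (1 - s) * (1 + s) := by linear_combination hsq
    calc ‖z‖ ^ 2 = ‖z ^ 2‖ := by rw [norm_pow]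
      _ = _ := by rw [this, norm_mul]
  have hA : 0 < ‖1 - s‖ := by
    simpa [sub_eq_zero] using (norm_pos_iff.mpr (sub_ne_zero.mpr (Ne.symm hs1)))
  have hkey : ‖1 - s‖ < ‖z‖ := by
    nlinarith [norm_nonneg z]
  rw [rho, norm_div]
  rw [div_lt_one (norm_pos_iff.mpr hz0)]
  calc ‖1 - s‖ < ‖z‖ := hkey
    _ ≤ _ := le_refl _
end

section
/- For every real ω with ω ∉ ℕ, the Taylor coefficients of (1−z)^ω satisfy [zⁿ](1−z)^ω = (1/Γ(−ω)) · n^{−ω−1} · (1 + ω(ω+1)/(2n) + O(1/n²)) as n → ∞. -/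
open Complex Filter Asymptotics Topology Set

/-- The `n`-th Taylor coefficient of `f` at `0`, i.e. `f⁽ⁿ⁾(0)/n!`. -/
noncomputable def taylorCoeff (f : ℂ → ℂ) (n : ℕ) : ℂ :=
  iteratedDeriv n f 0 / (n.factorial : ℂ)

namespace Stmt16

noncomputable def Q (ω : ℝ) (n : ℕ) : ℝ := ∏ k ∈ Finset.range n, ((k : ℝ) - ω)

noncomputable def aa (ω : ℝ) (n : ℕ) : ℝ := Q ω n / n.factorial

noncomputable def tt (ω : ℝ) (n : ℕ) : ℝ := 1 + ω * (ω + 1) / (2 * (n : ℝ))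

noncomputable def uu (ω : ℝ) (n : ℕ) : ℝ := Real.Gamma (-ω) * aa ω n * (n : ℝ) ^ (ω + 1)

noncomputable def gg (ω : ℝ) (x : ℝ) : ℝ := (1 - ω * x) * (1 + x) ^ ω

noncomputable def gg1 (ω : ℝ) (x : ℝ) : ℝ :=
  -ω * (1 + x) ^ ω + (1 - ω * x) * ω * (1 + x) ^ (ω - 1)

noncomputable def gg2 (ω : ℝ) (x : ℝ) : ℝ :=
  -2 * ω * ω * (1 + x) ^ (ω - 1) + (1 - ω * x) * ω * (ω - 1) * (1 + x) ^ (ω - 2)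

noncomputable def NN (ω : ℝ) : ℕ := max (⌈|ω * (ω + 1)|⌉₊ + 1) 2

variable {ω : ℝ}

lemma Q_ne_zero (hω : ∀ m : ℕ, ω ≠ m) (n : ℕ) : Q ω n ≠ 0 :=
  Finset.prod_ne_zero_iff.2 fun k _ => sub_ne_zero.2 fun h => hω k h.symm

lemma gamma_ne (hω : ∀ m : ℕ, ω ≠ m) : Real.Gamma (-ω) ≠ 0 :=
  Real.Gamma_ne_zero fun m h => hω m (by linarith [neg_eq_iff_eq_neg.1 h])

lemma aa_succ (n : ℕ) : aa ω (n + 1) = aa ω n * ((n : ℝ) - ω) / (n + 1) := by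
  have h1 : (n.factorial : ℝ) ≠ 0 := Nat.cast_ne_zero.2 n.factorial_ne_zero
  have h2 : ((n : ℝ) + 1) ≠ 0 := by positivity
  rw [aa, aa, Q, Q, Finset.prod_range_succ, Nat.factorial_succ]
  push_cast
  rw [div_eq_div_iff (by positivity) h2, mul_comm ((n:ℝ)+1)]
  field_simp

lemma uu_eq (hω : ∀ m : ℕ, ω ≠ m) {n : ℕ} (hn : 1 ≤ n) :
    uu ω n = Real.Gamma (-ω) * (1 - ω / (n : ℝ))⁻¹ / Real.GammaSeq (-ω) n := by
  have hnpos : (0 : ℝ) < n := by exact_mod_cast hn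
  have hgs : Real.GammaSeq (-ω) n = (n : ℝ) ^ (-ω) * n.factorial / Q ω (n + 1) := by
    have hprod : ∏ j ∈ Finset.range (n+1), (-ω + (j:ℝ)) = Q ω (n + 1) :=
      Finset.prod_congr rfl fun k _ => by ring
    rw [Real.GammaSeq, hprod]
  have hQs : Q ω (n + 1) = Q ω n * ((n : ℝ) - ω) := by
    rw [Q, Finset.prod_range_succ]; rfl
  have hrp : (n : ℝ) ^ (ω + 1) * (n : ℝ) ^ (-ω) = n := by
    rw [← Real.rpow_add hnpos]
    norm_num
  have hne1 : ((n : ℝ) - ω) ≠ 0 := sub_ne_zero.2 fun h => hω n h.symm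
  have hne2 : (n.factorial : ℝ) ≠ 0 := Nat.cast_ne_zero.2 n.factorial_ne_zero
  have hne3 : (n : ℝ) ^ (-ω) ≠ 0 := (Real.rpow_pos_of_pos hnpos _).ne'
  have hinv : (1 - ω / (n : ℝ))⁻¹ = n / ((n : ℝ) - ω) := by
    rw [one_sub_div hnpos.ne', inv_div]
  rw [uu, aa, hgs, hQs, hinv]
  field_simp
  linear_combination (Real.Gamma (-ω) * Q ω n) * hrp

lemma lim_aux (hγ : Real.Gamma (-ω) ≠ 0) :
    Tendsto (fun n : ℕ => Real.Gamma (-ω) * (1 - ω / (n : ℝ))⁻¹ / Real.GammaSeq (-ω) n)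
      atTop (𝓝 1) := by
  have h1 : Tendsto (fun n : ℕ => (1 - ω / (n : ℝ))) atTop (𝓝 1) := by
    simpa using tendsto_const_nhds.sub (tendsto_const_div_atTop_nhds_zero_nat ω)
  have h2 := ((tendsto_const_nhds (x := Real.Gamma (-ω))).mul
    (h1.inv₀ one_ne_zero)).div (Real.GammaSeq_tendsto_Gamma (-ω)) hγ
  simp [hγ] at h2
  exact h2

lemma rpow_aux {x : ℝ} (hx : -1 < x) (p : ℝ) :
    HasDerivAt (fun y : ℝ => (1 + y) ^ p) (p * (1 + x) ^ (p - 1)) x := by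
  have h0 : (1 : ℝ) + x ≠ 0 := by linarith
  have := ((hasDerivAt_id x).const_add 1).rpow_const (p := p) (Or.inl h0)
  simpa using this

lemma lin_aux (x : ℝ) : HasDerivAt (fun y : ℝ => 1 - ω * y) (-ω) x := by
  simpa using ((hasDerivAt_id x).const_mul ω).const_sub 1

lemma hasDerivAt_gg {x : ℝ} (hx : -1 < x) : HasDerivAt (gg ω) (gg1 ω x) x := by
  have := (lin_aux (ω := ω) x).mul (rpow_aux hx ω)
  refine this.congr_deriv ?_
  simp only [gg1]; ring

lemma hasDerivAt_gg1 {x : ℝ} (hx : -1 < x) : HasDerivAt (gg1 ω) (gg2 ω x) x := by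
  have h1 : HasDerivAt (fun y : ℝ => -ω * (1 + y) ^ ω) (-ω * (ω * (1 + x) ^ (ω - 1))) x :=
    (rpow_aux hx ω).const_mul (-ω)
  have h2 : HasDerivAt (fun y : ℝ => (1 - ω * y) * ω * (1 + y) ^ (ω - 1))
      ((1 - ω * x) * ω * ((ω - 1) * (1 + x) ^ (ω - 1 - 1)) + -ω * ω * (1 + x) ^ (ω - 1)) x := by
    have ha : HasDerivAt (fun y : ℝ => (1 - ω * y) * ω) (-ω * ω) x :=
      (lin_aux x).mul_const ω
    have := ha.mul (rpow_aux hx (ω - 1))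
    refine this.congr_deriv ?_
    ring
  have := h1.add h2
  refine this.congr_deriv ?_
  simp only [gg2]
  rw [show ω - 1 - 1 = ω - 2 by ring]
  ring

lemma contDiffOn_gg : ContDiffOn ℝ 3 (gg ω) (Icc (0:ℝ) (1/2)) := by
  intro x hx
  have h0 : (1 : ℝ) + x ≠ 0 := by have := hx.1; positivity
  have : ContDiffAt ℝ 3 (gg ω) x := by
    apply ContDiffAt.mul
    · exact (contDiffAt_const.sub (contDiffAt_const.mul contDiffAt_id))
    · exact (contDiffAt_const.add contDiffAt_id).rpow_const_of_ne h0
  exact this.contDiffWithinAt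

lemma taylor_poly_eq :
    ∀ x : ℝ, taylorWithinEval (gg ω) 2 (Icc (0:ℝ) (1/2)) 0 x = 1 - ω * (ω + 1) / 2 * x ^ 2 := by
  intro x
  have hu : UniqueDiffOn ℝ (Icc (0:ℝ) (1/2)) := uniqueDiffOn_Icc (by norm_num)
  have hu0 : UniqueDiffWithinAt ℝ (Icc (0:ℝ) (1/2)) 0 :=
    hu 0 (by constructor <;> norm_num)
  have h0 : iteratedDerivWithin 0 (gg ω) (Icc (0:ℝ) (1/2)) 0 = 1 := by
    simp [gg, Real.one_rpow]
  have hd1 : ∀ y ∈ Icc (0:ℝ) (1/2), derivWithin (gg ω) (Icc (0:ℝ) (1/2)) y = gg1 ω y := by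
    intro y hy
    rw [(hasDerivAt_gg (by linarith [hy.1])).differentiableAt.derivWithin (hu y hy)]
    exact (hasDerivAt_gg (by linarith [hy.1])).deriv
  have h1 : iteratedDerivWithin 1 (gg ω) (Icc (0:ℝ) (1/2)) 0 = 0 := by
    rw [iteratedDerivWithin_one]
    rw [hd1 0 (by constructor <;> norm_num)]
    simp [gg1, Real.one_rpow]
  have h2 : iteratedDerivWithin 2 (gg ω) (Icc (0:ℝ) (1/2)) 0 = -(ω * (ω + 1)) := by
    have h21 : iteratedDerivWithin 2 (gg ω) (Icc (0:ℝ) (1/2)) 0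
        = derivWithin (iteratedDerivWithin 1 (gg ω) (Icc (0:ℝ) (1/2))) (Icc (0:ℝ) (1/2)) 0 := by
      rw [show (2:ℕ) = 1 + 1 from rfl, iteratedDerivWithin_succ]
    have heq : EqOn (iteratedDerivWithin 1 (gg ω) (Icc (0:ℝ) (1/2))) (gg1 ω)
        (Icc (0:ℝ) (1/2)) := fun y hy => by
      rw [iteratedDerivWithin_one]; exact hd1 y hy
    rw [h21, derivWithin_congr heq (heq (by constructor <;> norm_num))]
    rw [(hasDerivAt_gg1 (by norm_num : (-1:ℝ) < 0)).differentiableAt.derivWithin hu0,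
      (hasDerivAt_gg1 (by norm_num : (-1:ℝ) < 0)).deriv]
    simp [gg2, Real.one_rpow]
    ring
  rw [taylor_within_apply]
  rw [Finset.sum_range_succ, Finset.sum_range_succ, Finset.sum_range_one]
  rw [h0, h1, h2]
  simp
  ring

lemma NN_ge2 : 2 ≤ NN ω := le_max_right _ _

lemma tt_bounds {n : ℕ} (hn : NN ω ≤ n) : 1/2 ≤ tt ω n ∧ tt ω n ≤ 3/2 := by
  have hn0 : (0:ℝ) < n := by
    have : 2 ≤ n := le_trans NN_ge2 hn
    exact_mod_cast lt_of_lt_of_le (by norm_num) this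
  have h1 : |ω * (ω + 1)| ≤ n := by
    calc |ω * (ω + 1)| ≤ ⌈|ω * (ω + 1)|⌉₊ := Nat.le_ceil _
    _ ≤ (n : ℝ) := by
        have : ⌈|ω * (ω + 1)|⌉₊ ≤ n := le_trans (le_trans (Nat.le_succ _) (le_max_left _ _)) hn
        exact_mod_cast this
  have h2 : |ω * (ω + 1) / (2 * n)| ≤ 1/2 := by
    rw [abs_div, abs_of_pos (by positivity : (0:ℝ) < 2 * n)]
    rw [div_le_div_iff₀ (by positivity) (by norm_num)]
    nlinarith
  have := abs_le.1 h2
  constructor <;> [skip; skip] <;> simp only [tt] <;> linarith [this.1, this.2]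

lemma tail_lemma {w : ℕ → ℝ} {C : ℝ} {N : ℕ} (hC : 0 ≤ C) (hN : 2 ≤ N)
    (hlim : Tendsto w atTop (𝓝 1))
    (hstep : ∀ n, N ≤ n → |w (n+1) - w n| ≤ C / (n:ℝ)^3) :
    ∀ n, N ≤ n → |w n - 1| ≤ 2 * C / (n:ℝ)^2 := by
  intro n hn
  have hn1 : (1:ℝ) < n := by exact_mod_cast lt_of_lt_of_le (by norm_num) (le_trans hN hn)
  have key : ∀ m, n ≤ m → |w m - w n| ≤ C/2 * (1/((n:ℝ)-1)^2 - 1/((m:ℝ)-1)^2) := by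
    intro m hm
    induction m, hm using Nat.le_induction with
    | base => simp
    | succ m hm ih =>
      have hm1 : (1:ℝ) < m := lt_of_lt_of_le hn1 (by exact_mod_cast hm)
      have hm2 : (2:ℝ) ≤ m := by
        have : 2 ≤ m := le_trans (le_trans hN hn) hm
        exact_mod_cast this
      have hstep' := hstep m (le_trans hn hm)
      have hkey : C / (m:ℝ)^3 ≤ C/2 * (1/((m:ℝ)-1)^2 - 1/(m:ℝ)^2) := by
        have hm1' : ((m:ℝ)-1) ≠ 0 := by nlinarith
        have hm0' : (m:ℝ) ≠ 0 := by nlinarith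
        have e : C/2 * (1/((m:ℝ)-1)^2 - 1/(m:ℝ)^2)
            = C*(2*(m:ℝ)-1)/(2*(((m:ℝ)-1)^2*(m:ℝ)^2)) := by
          have hden : (((m:ℝ)-1)^2*(m:ℝ)^2) ≠ 0 :=
            mul_ne_zero (pow_ne_zero 2 hm1') (pow_ne_zero 2 hm0')
          have hden2 : (2:ℝ)*(((m:ℝ)-1)^2*(m:ℝ)^2) ≠ 0 := mul_ne_zero two_ne_zero hden
          rw [div_sub_div _ _ (pow_ne_zero 2 hm1') (pow_ne_zero 2 hm0'), ← mul_div_assoc,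
            div_eq_div_iff hden hden2]
          ring
        rw [e, div_le_div_iff₀ (by positivity)
          (by nlinarith [sq_nonneg ((m:ℝ)-1), sq_nonneg (m:ℝ)] :
            (0:ℝ) < 2*(((m:ℝ)-1)^2*(m:ℝ)^2))]
        nlinarith [mul_nonneg hC (by nlinarith : (0:ℝ) ≤ (m:ℝ)^2*(3*(m:ℝ)-2))]
      have hc1 : ((m+1 : ℕ) : ℝ) - 1 = (m:ℝ) := by push_cast; ring
      rw [hc1]
      calc |w (m+1) - w n| ≤ |w m - w n| + |w (m+1) - w m| := by
            have := abs_add_le (w m - w n) (w (m+1) - w m); rw [show w m - w n + (w (m+1) - w m) = w (m+1) - w n by ring] at this; exact this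
      _ ≤ C/2 * (1/((n:ℝ)-1)^2 - 1/((m:ℝ)-1)^2) + C / (m:ℝ)^3 := add_le_add ih hstep'
      _ ≤ C/2 * (1/((n:ℝ)-1)^2 - 1/((m:ℝ)-1)^2) + C/2 * (1/((m:ℝ)-1)^2 - 1/(m:ℝ)^2) := by linarith [hkey]
      _ = C/2 * (1/((n:ℝ)-1)^2 - 1/(m:ℝ)^2) := by ring
  -- take the limit m → ∞
  have hlim2 : Tendsto (fun m : ℕ => |w m - w n|) atTop (𝓝 |1 - w n|) :=
    ((hlim.sub tendsto_const_nhds).abs)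
  have hle : |1 - w n| ≤ C/2 * (1/((n:ℝ)-1)^2) := by
    apply le_of_tendsto hlim2
    filter_upwards [eventually_ge_atTop n] with m hm
    calc |w m - w n| ≤ C/2 * (1/((n:ℝ)-1)^2 - 1/((m:ℝ)-1)^2) := key m hm
    _ ≤ C/2 * (1/((n:ℝ)-1)^2) := by
        apply mul_le_mul_of_nonneg_left _ (by linarith)
        have hm1 : (1:ℝ) < m := lt_of_lt_of_le hn1 (by exact_mod_cast hm)
        have : 0 ≤ 1/((m:ℝ)-1)^2 := by positivity
        linarith
  rw [abs_sub_comm]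
  calc |1 - w n| ≤ C/2 * (1/((n:ℝ)-1)^2) := hle
  _ ≤ 2 * C / (n:ℝ)^2 := by
      have hn2 : (2:ℝ) ≤ n := by exact_mod_cast le_trans hN hn
      rw [mul_one_div, div_le_div_iff₀ (by nlinarith) (by positivity)]
      nlinarith [mul_nonneg hC (mul_nonneg (by linarith : (0:ℝ) ≤ (n:ℝ)-2)
        (by linarith : (0:ℝ) ≤ 3*(n:ℝ)-2))]

lemma gg_taylor (ω : ℝ) : ∃ C : ℝ, 0 ≤ C ∧ ∀ x ∈ Icc (0:ℝ) (1/2),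
    |gg ω x - (1 - ω * (ω + 1) / 2 * x ^ 2)| ≤ C * x ^ 3 := by
  obtain ⟨C, hC⟩ := exists_taylor_mean_remainder_bound (n := 2)
    (by norm_num : (0:ℝ) ≤ 1/2) (by exact_mod_cast contDiffOn_gg (ω := ω))
  refine ⟨max C 0, le_max_right _ _, fun x hx => ?_⟩
  have h := hC x hx
  rw [taylor_poly_eq] at h
  simp only [Real.norm_eq_abs, sub_zero] at h
  refine h.trans ?_
  have hx0 : 0 ≤ x := hx.1
  have : x ^ (2+1) = x ^ 3 := by norm_num
  rw [this]
  exact mul_le_mul_of_nonneg_right (le_max_left _ _) (by positivity)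

lemma rho_est (ω : ℝ) : ∃ C : ℝ, 0 ≤ C ∧ ∀ n : ℕ, NN ω ≤ n →
    |gg ω (1/(n:ℝ)) * tt ω n / tt ω (n+1) - 1| ≤ C / (n:ℝ)^3 := by
  obtain ⟨C₁, hC₁, hT⟩ := gg_taylor ω
  set s : ℝ := ω * (ω + 1) / 2 with hs
  refine ⟨2 * (C₁ * (3/2) + (|s| + s^2)), by positivity, fun n hn => ?_⟩
  have hn2 : 2 ≤ n := le_trans NN_ge2 hn
  have hnR : (2:ℝ) ≤ n := by exact_mod_cast hn2
  have hn0 : (0:ℝ) < n := by linarith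
  have hx : (1/(n:ℝ)) ∈ Icc (0:ℝ) (1/2) := by
    constructor
    · positivity
    · rw [div_le_div_iff₀ hn0 (by norm_num)]; linarith
  have htn := tt_bounds hn
  have htn1 := tt_bounds (le_trans hn (Nat.le_succ n))
  have htn1ne : tt ω (n+1) ≠ 0 := by linarith [htn1.1]
  -- decomposition
  have hdec : gg ω (1/(n:ℝ)) * tt ω n / tt ω (n+1) - 1
      = ((gg ω (1/(n:ℝ)) - (1 - ω * (ω + 1) / 2 * (1/(n:ℝ))^2)) * tt ω n
        + ((1 - ω * (ω + 1) / 2 * (1/(n:ℝ))^2) * tt ω n - tt ω (n+1))) / tt ω (n+1) := by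
    field_simp
    ring
  -- algebraic part
  have halg : (1 - ω * (ω + 1) / 2 * (1/(n:ℝ))^2) * tt ω n - tt ω (n+1)
      = -(s/((n:ℝ)^2*((n:ℝ)+1)) + s^2/(n:ℝ)^3) := by
    simp only [tt, hs]
    push_cast
    field_simp
    ring
  have halg_bd : |(1 - ω * (ω + 1) / 2 * (1/(n:ℝ))^2) * tt ω n - tt ω (n+1)|
      ≤ (|s| + s^2) / (n:ℝ)^3 := by
    rw [halg, abs_neg]
    have h1 : |s/((n:ℝ)^2*((n:ℝ)+1)) + s^2/(n:ℝ)^3|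
        ≤ |s|/((n:ℝ)^2*((n:ℝ)+1)) + s^2/(n:ℝ)^3 := by
      refine (abs_add_le _ _).trans ?_
      have e1 : |s/((n:ℝ)^2*((n:ℝ)+1))| = |s|/((n:ℝ)^2*((n:ℝ)+1)) := by
        rw [abs_div, abs_of_pos (show (0:ℝ) < (n:ℝ)^2*((n:ℝ)+1) by positivity)]
      have e2 : |s^2/(n:ℝ)^3| = s^2/(n:ℝ)^3 := abs_of_nonneg (by positivity)
      rw [e1, e2]
    refine h1.trans ?_
    have hmono : |s|/((n:ℝ)^2*((n:ℝ)+1)) ≤ |s|/(n:ℝ)^3 := by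
      gcongr
      nlinarith
    calc |s|/((n:ℝ)^2*((n:ℝ)+1)) + s^2/(n:ℝ)^3 ≤ |s|/(n:ℝ)^3 + s^2/(n:ℝ)^3 :=
          add_le_add hmono le_rfl
      _ = (|s| + s^2)/(n:ℝ)^3 := (add_div _ _ _).symm
  have hTx := hT (1/(n:ℝ)) hx
  have hTx' : |gg ω (1/(n:ℝ)) - (1 - ω * (ω + 1) / 2 * (1/(n:ℝ))^2)| ≤ C₁ / (n:ℝ)^3 := by
    refine hTx.trans (le_of_eq ?_)
    rw [div_pow, one_pow, mul_one_div]
  have hnum : |(gg ω (1/(n:ℝ)) - (1 - ω * (ω + 1) / 2 * (1/(n:ℝ))^2)) * tt ω n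
        + ((1 - ω * (ω + 1) / 2 * (1/(n:ℝ))^2) * tt ω n - tt ω (n+1))|
      ≤ (C₁ * (3/2) + (|s| + s^2)) / (n:ℝ)^3 := by
    refine (abs_add_le _ _).trans ?_
    rw [add_div]
    refine add_le_add ?_ halg_bd
    rw [abs_mul]
    calc |gg ω (1/(n:ℝ)) - (1 - ω * (ω + 1) / 2 * (1/(n:ℝ))^2)| * |tt ω n|
        ≤ (C₁/(n:ℝ)^3) * (3/2) :=
          mul_le_mul hTx' (abs_le.2 ⟨by linarith [htn.1], htn.2⟩) (abs_nonneg _)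
            (by positivity)
      _ = C₁ * (3/2) / (n:ℝ)^3 := by ring
  rw [hdec, abs_div, abs_of_pos (show (0:ℝ) < tt ω (n+1) by linarith [htn1.1])]
  have hfin : |(gg ω (1/(n:ℝ)) - (1 - ω * (ω + 1) / 2 * (1/(n:ℝ))^2)) * tt ω n
        + ((1 - ω * (ω + 1) / 2 * (1/(n:ℝ))^2) * tt ω n - tt ω (n+1))| / tt ω (n+1)
      ≤ (C₁ * (3/2) + (|s| + s^2)) / (n:ℝ)^3 / (1/2) :=
    div_le_div₀ (by positivity) hnum one_half_pos htn1.1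
  refine hfin.trans (le_of_eq ?_)
  ring

lemma uu_succ {n : ℕ} (hn : 1 ≤ n) : uu ω (n+1) = uu ω n * gg ω (1/(n:ℝ)) := by
  have hn0 : (0:ℝ) < n := by exact_mod_cast hn
  have e1 : (((n+1:ℕ)):ℝ) ^ (ω+1) = ((n:ℝ)+1) ^ ω * ((n:ℝ)+1) := by
    push_cast
    rw [Real.rpow_add_one (by positivity)]
  have e2 : (n:ℝ) ^ (ω+1) = (n:ℝ) ^ ω * (n:ℝ) := Real.rpow_add_one hn0.ne' ω
  have e3 : (1 + 1/(n:ℝ)) ^ ω = ((n:ℝ)+1) ^ ω / (n:ℝ) ^ ω := by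
    rw [show 1 + 1/(n:ℝ) = ((n:ℝ)+1)/(n:ℝ) by field_simp,
      Real.div_rpow (by positivity) hn0.le]
  have hA : (0:ℝ) < (n:ℝ) ^ ω := Real.rpow_pos_of_pos hn0 ω
  rw [uu, uu, aa_succ, gg, e1, e2, e3]
  have hne : ((n:ℝ)+1) ≠ 0 := by positivity
  field_simp

lemma tt_tendsto (ω : ℝ) : Tendsto (tt ω) atTop (𝓝 1) := by
  have h : Tendsto (fun n : ℕ => ω * (ω + 1) / 2 / (n:ℝ)) atTop (𝓝 0) :=
    tendsto_const_div_atTop_nhds_zero_nat _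
  have : Tendsto (fun n : ℕ => 1 + ω * (ω + 1) / 2 / (n:ℝ)) atTop (𝓝 (1 + 0)) :=
    tendsto_const_nhds.add h
  simp only [add_zero] at this
  refine this.congr fun n => ?_
  simp only [tt]
  ring

lemma uu_tendsto (hω : ∀ m : ℕ, ω ≠ m) : Tendsto (uu ω) atTop (𝓝 1) := by
  refine (lim_aux (gamma_ne hω)).congr' ?_
  filter_upwards [eventually_ge_atTop 1] with n hn
  exact (uu_eq hω hn).symm

lemma main_real (hω : ∀ m : ℕ, ω ≠ m) :
    ∃ C : ℝ, ∃ N : ℕ, ∀ n : ℕ, N ≤ n →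
      |aa ω n - 1 / Real.Gamma (-ω) * (n:ℝ) ^ (-ω-1) * tt ω n|
        ≤ C * ((n:ℝ) ^ (-ω-1) * (n:ℝ) ^ (-(2:ℝ))) := by
  set w : ℕ → ℝ := fun n => uu ω n / tt ω n with hw
  have hwlim : Tendsto w atTop (𝓝 1) := by
    have := (uu_tendsto hω).div (tt_tendsto ω) one_ne_zero
    simp at this
    exact this
  obtain ⟨C, hC0, hrho⟩ := rho_est ω
  have hwb : ∀ᶠ n in atTop, |w n| ≤ 2 := by
    have h1 : Tendsto (fun n => |w n|) atTop (𝓝 |1|) := hwlim.abs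
    simp only [abs_one] at h1
    exact h1.eventually_le_const (by norm_num)
  obtain ⟨N₁, hN₁⟩ := eventually_atTop.1 hwb
  set N : ℕ := max (max N₁ (NN ω)) 2 with hN
  have hN2 : 2 ≤ N := le_max_right _ _
  have hstep : ∀ n, N ≤ n → |w (n+1) - w n| ≤ (2*C) / (n:ℝ)^3 := by
    intro n hn
    have hnNN : NN ω ≤ n := le_trans (le_trans (le_max_right _ _) (le_max_left _ _)) hn
    have hn1 : 1 ≤ n := le_trans (by norm_num) (le_trans hN2 hn)
    have htn := tt_bounds hnNN
    have htn1 := tt_bounds (le_trans hnNN (Nat.le_succ n))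
    have htne : tt ω n ≠ 0 := by linarith [htn.1]
    have htn1e : tt ω (n+1) ≠ 0 := by linarith [htn1.1]
    have hrel : w (n+1) = w n * (gg ω (1/(n:ℝ)) * tt ω n / tt ω (n+1)) := by
      simp only [hw]
      rw [uu_succ hn1]
      field_simp
    have : w (n+1) - w n = w n * (gg ω (1/(n:ℝ)) * tt ω n / tt ω (n+1) - 1) := by
      rw [hrel]; ring
    rw [this, abs_mul]
    calc |w n| * |gg ω (1/(n:ℝ)) * tt ω n / tt ω (n+1) - 1|
        ≤ 2 * (C / (n:ℝ)^3) := by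
          apply mul_le_mul (hN₁ n (le_trans (le_trans (le_max_left _ _) (le_max_left _ _)) hn))
            (hrho n hnNN) (abs_nonneg _) (by norm_num)
      _ = 2*C / (n:ℝ)^3 := by ring
  have htail := tail_lemma (by linarith : (0:ℝ) ≤ 2*C) hN2 hwlim hstep
  refine ⟨|1 / Real.Gamma (-ω)| * (3/2) * (4*C), N, fun n hn => ?_⟩
  have hnNN : NN ω ≤ n := le_trans (le_trans (le_max_right _ _) (le_max_left _ _)) hn
  have hn2 : 2 ≤ n := le_trans hN2 hn
  have hn0 : (0:ℝ) < n := by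
    have : (2:ℝ) ≤ n := by exact_mod_cast hn2
    linarith
  have htn := tt_bounds hnNN
  have htne : tt ω n ≠ 0 := by linarith [htn.1]
  have hγ := gamma_ne hω
  have hrp1 : (n:ℝ) ^ (-ω-1) * (n:ℝ) ^ (ω+1) = 1 := by
    rw [← Real.rpow_add hn0]
    norm_num
  have hkey : aa ω n - 1 / Real.Gamma (-ω) * (n:ℝ) ^ (-ω-1) * tt ω n
      = 1 / Real.Gamma (-ω) * (n:ℝ) ^ (-ω-1) * tt ω n * (w n - 1) := by
    have : 1 / Real.Gamma (-ω) * (n:ℝ) ^ (-ω-1) * tt ω n * w n = aa ω n := by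
      simp only [hw, uu]
      field_simp
      linear_combination (aa ω n) * hrp1
    linear_combination -this
  rw [hkey]
  have hb1 := htail n hn
  have hrp2 : (n:ℝ) ^ (-(2:ℝ)) = 1 / (n:ℝ)^2 := by
    rw [Real.rpow_neg hn0.le, show ((2:ℝ)) = ((2:ℕ):ℝ) by norm_num, Real.rpow_natCast]
    exact inv_eq_one_div _
  have hrp3 : (0:ℝ) < (n:ℝ) ^ (-ω-1) := Real.rpow_pos_of_pos hn0 _
  rw [abs_mul, abs_mul, abs_mul]
  rw [abs_of_pos hrp3]
  calc |1 / Real.Gamma (-ω)| * (n:ℝ) ^ (-ω-1) * |tt ω n| * |w n - 1|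
      ≤ |1 / Real.Gamma (-ω)| * (n:ℝ) ^ (-ω-1) * (3/2) * (2*(2*C)/(n:ℝ)^2) := by
        apply mul_le_mul
        · apply mul_le_mul_of_nonneg_left (abs_le.2 ⟨by linarith [htn.1], htn.2⟩)
          positivity
        · exact hb1
        · exact abs_nonneg _
        · positivity
    _ = |1 / Real.Gamma (-ω)| * (3/2) * (4*C) * ((n:ℝ) ^ (-ω-1) * (n:ℝ) ^ (-(2:ℝ))) := by
        rw [hrp2]; ring

lemma isOpen_S : IsOpen {z : ℂ | 1 - z ∈ slitPlane} :=
  isOpen_slitPlane.preimage (continuous_const.sub continuous_id)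

lemma iteratedDeriv_eq (ω : ℝ) (n : ℕ) :
    ∀ z : ℂ, (1 - z) ∈ slitPlane →
      iteratedDeriv n (fun z : ℂ => (1 - z) ^ (ω:ℂ)) z
        = (∏ k ∈ Finset.range n, ((k:ℂ) - (ω:ℂ))) * (1 - z) ^ ((ω:ℂ) - n) := by
  induction n with
  | zero => intro z hz; simp
  | succ n ih =>
    intro z hz
    rw [iteratedDeriv_succ]
    have hev : iteratedDeriv n (fun z : ℂ => (1 - z) ^ (ω:ℂ))
        =ᶠ[𝓝 z] fun w => (∏ k ∈ Finset.range n, ((k:ℂ) - (ω:ℂ))) * (1 - w) ^ ((ω:ℂ) - n) := by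
      filter_upwards [isOpen_S.mem_nhds hz] with w hw
      exact ih w hw
    rw [hev.deriv_eq]
    have hd : HasDerivAt (fun w : ℂ => (1 - w) ^ ((ω:ℂ) - n))
        (((ω:ℂ) - n) * (1 - z) ^ ((ω:ℂ) - n - 1) * (-1)) z := by
      have h1 : HasDerivAt (fun w : ℂ => 1 - w) (-1 : ℂ) z := by
        simpa using (hasDerivAt_id z).const_sub 1
      exact h1.cpow_const hz
    rw [(hd.const_mul _).deriv]
    rw [Finset.prod_range_succ]
    rw [show (ω:ℂ) - ((n+1 : ℕ):ℂ) = (ω:ℂ) - (n:ℂ) - 1 by push_cast; ring]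
    ring

lemma taylorCoeff_eq (ω : ℝ) (n : ℕ) :
    taylorCoeff (fun z : ℂ => (1 - z) ^ (ω:ℂ)) n = ((aa ω n : ℝ) : ℂ) := by
  have h0 : (1 : ℂ) - 0 ∈ slitPlane := by
    simp [Complex.mem_slitPlane_iff]
  have := iteratedDeriv_eq ω n 0 h0
  rw [taylorCoeff, this]
  rw [show (1:ℂ) - 0 = 1 by ring, Complex.one_cpow]
  rw [aa, Q]
  push_cast
  ring

end Stmt16

/-- For real `ω ∉ ℕ`:
`[zⁿ](1-z)^ω = (1/Γ(-ω)) n^{-ω-1} (1 + ω(ω+1)/(2n) + O(1/n²))` as `n → ∞`,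
with the principal branch of `(1-z)^ω`. -/
theorem stmt_16 (ω : ℝ) (hω : ∀ m : ℕ, ω ≠ m) :
    (fun n : ℕ =>
        taylorCoeff (fun z : ℂ => (1 - z) ^ (ω : ℂ)) n
          - ((1 / Real.Gamma (-ω) * (n : ℝ) ^ (-ω - 1)
              * (1 + ω * (ω + 1) / (2 * n)) : ℝ) : ℂ))
      =O[atTop] (fun n : ℕ => (n : ℝ) ^ (-ω - 1) * (n : ℝ) ^ (-(2 : ℝ))) := by
  obtain ⟨C, N, hmain⟩ := Stmt16.main_real hω
  rw [isBigO_iff]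
  refine ⟨C, ?_⟩
  filter_upwards [eventually_ge_atTop (max N 1)] with n hn
  have hnN : N ≤ n := le_trans (le_max_left _ _) hn
  have hn1 : 1 ≤ n := le_trans (le_max_right _ _) hn
  have hn0 : (0:ℝ) < n := by exact_mod_cast hn1
  have hcoeff : taylorCoeff (fun z : ℂ => (1 - z) ^ (ω : ℂ)) n
      = ((Stmt16.aa ω n : ℝ) : ℂ) := Stmt16.taylorCoeff_eq ω n
  have heq : taylorCoeff (fun z : ℂ => (1 - z) ^ (ω : ℂ)) n
        - ((1 / Real.Gamma (-ω) * (n : ℝ) ^ (-ω - 1)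
            * (1 + ω * (ω + 1) / (2 * n)) : ℝ) : ℂ)
      = (((Stmt16.aa ω n - 1 / Real.Gamma (-ω) * (n:ℝ) ^ (-ω-1) * Stmt16.tt ω n : ℝ)) : ℂ) := by
    rw [hcoeff, ← Complex.ofReal_sub]
    norm_num [Stmt16.tt]
  rw [heq]
  have h1 := hmain n hnN
  have h2 : (0:ℝ) < (n:ℝ) ^ (-ω-1) * (n:ℝ) ^ (-(2:ℝ)) := by positivity
  calc ‖(((Stmt16.aa ω n - 1 / Real.Gamma (-ω) * (n:ℝ) ^ (-ω-1) * Stmt16.tt ω n : ℝ)) : ℂ)‖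
      = |Stmt16.aa ω n - 1 / Real.Gamma (-ω) * (n:ℝ) ^ (-ω-1) * Stmt16.tt ω n| := by
        rw [Complex.norm_real, Real.norm_eq_abs]
    _ ≤ C * ((n:ℝ) ^ (-ω-1) * (n:ℝ) ^ (-(2:ℝ))) := h1
    _ = C * ‖(n:ℝ) ^ (-ω-1) * (n:ℝ) ^ (-(2:ℝ))‖ := by
        rw [Real.norm_eq_abs, abs_of_pos h2]
end
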